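/- Let ξ ∈ ℂ and let Φ : ℝ³ \ {0} → ℂ be given by Φ(x) = e^{iξ‖x‖}/(4π‖x‖). Then Φ satisfies the homogeneous Helmholtz equation away from the origin: for every x ∈ ℝ³ with x ≠ 0, ∑_{j=1}^{3} ∂ⱼ∂ⱼΦ(x) + ξ²Φ(x) = 0. -/

import Mathlib

open Complex Real

/-- The outgoing fundamental solution of the Helmholtz equation in `ℝ³` with
complex wavenumber `ξ`: `Φ(x) = e^{iξ‖x‖}/(4π‖x‖)`. -/
noncomputable def Phi (ξ : ℂ) (x : EuclideanSpace ℝ (Fin 3)) : ℂ :=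
  Complex.exp (Complex.I * ξ * (‖x‖ : ℂ)) / (4 * (Real.pi : ℂ) * (‖x‖ : ℂ))

/-- Partial derivative `∂ₘ f` of a function `f : ℝ³ → ℂ`. -/
noncomputable def pd (m : Fin 3) (f : EuclideanSpace ℝ (Fin 3) → ℂ)
    (x : EuclideanSpace ℝ (Fin 3)) : ℂ :=
  fderiv ℝ f x (EuclideanSpace.single m 1)

noncomputable abbrev E3 := EuclideanSpace ℝ (Fin 3)

/-- The radial profile `g1(r) = e^{iξr}/(4πr)`. -/
noncomputable def g1 (ξ : ℂ) (r : ℝ) : ℂ :=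
  Complex.exp (Complex.I * ξ * r) / (4 * (Real.pi : ℂ) * r)

/-- `g1'(r)/r`. -/
noncomputable def qq (ξ : ℂ) (r : ℝ) : ℂ :=
  Complex.exp (Complex.I * ξ * r) * (Complex.I * ξ * r - 1) / (4 * (Real.pi : ℂ) * r ^ 3)

/-- Derivative of `g1`. -/
noncomputable def d1 (ξ : ℂ) (r : ℝ) : ℂ :=
  Complex.exp (Complex.I * ξ * r) * (Complex.I * ξ * r - 1) / (4 * (Real.pi : ℂ) * r ^ 2)

/-- Derivative of `qq`. -/
noncomputable def qq' (ξ : ℂ) (r : ℝ) : ℂ :=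
  Complex.exp (Complex.I * ξ * r) *
    ((Complex.I * ξ * r) ^ 2 - 3 * (Complex.I * ξ * r - 1)) / (4 * (Real.pi : ℂ) * r ^ 4)

lemma hasDerivAt_e (ξ : ℂ) (r : ℝ) :
    HasDerivAt (fun t : ℝ => Complex.exp (Complex.I * ξ * t))
      (Complex.I * ξ * Complex.exp (Complex.I * ξ * r)) r := by
  have h : HasDerivAt (fun z : ℂ => Complex.exp (Complex.I * ξ * z))
      (Complex.exp (Complex.I * ξ * r) * (Complex.I * ξ * 1)) (r : ℂ) :=
    ((hasDerivAt_id (r : ℂ)).const_mul (Complex.I * ξ)).cexp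
  have := h.comp_ofReal
  convert this using 1
  ring

lemma pi4_ne : (4 : ℂ) * (Real.pi : ℂ) ≠ 0 := by
  simp [Real.pi_ne_zero]

lemma hasDerivAt_g1 (ξ : ℂ) {r : ℝ} (hr : r ≠ 0) :
    HasDerivAt (g1 ξ) (d1 ξ r) r := by
  have hrc : (r : ℂ) ≠ 0 := Complex.ofReal_ne_zero.2 hr
  have hpi : (Real.pi : ℂ) ≠ 0 := Complex.ofReal_ne_zero.2 Real.pi_ne_zero
  have hden : HasDerivAt (fun t : ℝ => (4 * (Real.pi : ℂ) * t)) (4 * (Real.pi : ℂ)) r := by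
    have : HasDerivAt (fun z : ℂ => 4 * (Real.pi : ℂ) * z) (4 * (Real.pi : ℂ) * 1) (r : ℂ) :=
      (hasDerivAt_id (r : ℂ)).const_mul _
    simpa using this.comp_ofReal
  have hd0 : (4 * (Real.pi : ℂ) * r) ≠ 0 := mul_ne_zero pi4_ne hrc
  have := (hasDerivAt_e ξ r).div hden hd0
  refine this.congr_deriv ?_
  unfold d1
  field_simp [hrc, hpi]

lemma hasDerivAt_qq (ξ : ℂ) {r : ℝ} (hr : r ≠ 0) :
    HasDerivAt (qq ξ) (qq' ξ r) r := by
  have hrc : (r : ℂ) ≠ 0 := Complex.ofReal_ne_zero.2 hr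
  have hpi : (Real.pi : ℂ) ≠ 0 := Complex.ofReal_ne_zero.2 Real.pi_ne_zero
  have hlin : HasDerivAt (fun t : ℝ => Complex.I * ξ * t - 1) (Complex.I * ξ) r := by
    have : HasDerivAt (fun z : ℂ => Complex.I * ξ * z - 1) (Complex.I * ξ * 1) (r : ℂ) :=
      ((hasDerivAt_id (r : ℂ)).const_mul _).sub_const 1
    simpa using this.comp_ofReal
  have hN := (hasDerivAt_e ξ r).mul hlin
  have hden : HasDerivAt (fun t : ℝ => (4 * (Real.pi : ℂ) * (t : ℂ) ^ 3))
      (4 * (Real.pi : ℂ) * (3 * (r : ℂ) ^ 2)) r := by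
    have : HasDerivAt (fun z : ℂ => 4 * (Real.pi : ℂ) * z ^ 3)
        (4 * (Real.pi : ℂ) * ((3 : ℕ) * (r : ℂ) ^ 2)) (r : ℂ) :=
      (hasDerivAt_pow 3 (r : ℂ)).const_mul _
    simpa using this.comp_ofReal
  have hd0 : (4 * (Real.pi : ℂ) * (r : ℂ) ^ 3) ≠ 0 := mul_ne_zero pi4_ne (pow_ne_zero _ hrc)
  have := hN.div hden hd0
  refine this.congr_deriv ?_
  unfold qq'
  simp only [Pi.mul_apply]
  field_simp [hrc, hpi]
  ring

lemma final_identity (ξ : ℂ) {r : ℝ} (hr : r ≠ 0) :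
    3 * qq ξ r + r * qq' ξ r + ξ ^ 2 * g1 ξ r = 0 := by
  have hrc : (r : ℂ) ≠ 0 := Complex.ofReal_ne_zero.2 hr
  have hpi : (Real.pi : ℂ) ≠ 0 := Complex.ofReal_ne_zero.2 Real.pi_ne_zero
  unfold qq qq' g1
  field_simp [hrc, hpi]
  ring_nf
  simp [Complex.I_sq]

lemma norm_hasFDerivAt {x : E3} (hx : x ≠ 0) :
    HasFDerivAt (fun y : E3 => ‖y‖) ((‖x‖⁻¹ : ℝ) • innerSL ℝ x) x := by
  have h2 : HasFDerivAt (fun y : E3 => ‖y‖ ^ 2) (2 • innerSL ℝ x) x :=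
    (hasStrictFDerivAt_norm_sq x).hasFDerivAt
  have hne : ‖x‖ ^ 2 ≠ 0 := pow_ne_zero _ (norm_ne_zero_iff.2 hx)
  have := h2.sqrt hne
  have hfe : (fun y : E3 => Real.sqrt (‖y‖ ^ 2)) = fun y : E3 => ‖y‖ :=
    funext fun y => Real.sqrt_sq (norm_nonneg y)
  rw [hfe] at this
  refine this.congr_fderiv ?_
  rw [Real.sqrt_sq (norm_nonneg x)]
  rw [show (2 : ℕ) • innerSL ℝ x = (2 : ℝ) • innerSL ℝ x by module, smul_smul]
  congr 1
  have h0 : ‖x‖ ≠ 0 := norm_ne_zero_iff.2 hx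
  field_simp

lemma pd_radial {h : ℝ → ℂ} {h' : ℂ} {x : E3} (hx : x ≠ 0)
    (hh : HasDerivAt h h' ‖x‖) :
    HasFDerivAt (fun y : E3 => h ‖y‖)
      ((ContinuousLinearMap.smulRight (1 : ℝ →L[ℝ] ℝ) h').comp
        ((‖x‖⁻¹ : ℝ) • innerSL ℝ x)) x :=
  hh.hasFDerivAt.comp x (norm_hasFDerivAt hx)

lemma pd_Phi (ξ : ℂ) (m : Fin 3) {y : E3} (hy : y ≠ 0) :
    pd m (Phi ξ) y = ((y m : ℝ) : ℂ) * qq ξ ‖y‖ := by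
  have hr : ‖y‖ ≠ 0 := norm_ne_zero_iff.2 hy
  have hrc : ((‖y‖ : ℝ) : ℂ) ≠ 0 := Complex.ofReal_ne_zero.2 hr
  have hpi : (Real.pi : ℂ) ≠ 0 := Complex.ofReal_ne_zero.2 Real.pi_ne_zero
  have H := pd_radial hy (hasDerivAt_g1 ξ hr)
  have hPhi : Phi ξ = fun z : E3 => g1 ξ ‖z‖ := rfl
  rw [pd, hPhi, H.fderiv]
  simp only [ContinuousLinearMap.comp_apply, ContinuousLinearMap.smul_apply,
    ContinuousLinearMap.smulRight_apply, ContinuousLinearMap.one_apply,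
    innerSL_apply_apply, smul_eq_mul]
  rw [real_inner_comm, EuclideanSpace.inner_single_left]
  have hd1 : d1 ξ ‖y‖ = ((‖y‖ : ℝ) : ℂ) * qq ξ ‖y‖ := by
    unfold d1 qq
    field_simp [hrc, hpi]
  rw [hd1]
  simp only [Complex.real_smul, map_one, one_mul]
  push_cast
  field_simp [hrc]

/-- `Φ` satisfies the homogeneous Helmholtz equation away from the origin:
`ΔΦ(x) + ξ²Φ(x) = 0` for every `x ≠ 0`. -/
theorem stmt_3 (ξ : ℂ) (x : EuclideanSpace ℝ (Fin 3)) (hx : x ≠ 0) :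
    (∑ j : Fin 3, pd j (pd j (Phi ξ)) x) + ξ ^ 2 * Phi ξ x = 0 := by
  have hr : ‖x‖ ≠ 0 := norm_ne_zero_iff.2 hx
  have hrc : ((‖x‖ : ℝ) : ℂ) ≠ 0 := Complex.ofReal_ne_zero.2 hr
  have key : ∀ m : Fin 3, pd m (pd m (Phi ξ)) x
      = qq ξ ‖x‖ + ((x m : ℝ) : ℂ) ^ 2 * (qq' ξ ‖x‖ / ((‖x‖ : ℝ) : ℂ)) := by
    intro m
    have hev : pd m (Phi ξ) =ᶠ[nhds x] (fun y : E3 => ((y m : ℝ) : ℂ) * qq ξ ‖y‖) := by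
      filter_upwards [isOpen_compl_singleton.mem_nhds
        (by simpa using hx : x ∈ ({0}ᶜ : Set E3))] with y hy
      exact pd_Phi ξ m (by simpa using hy)
    have hcoord : HasFDerivAt (fun y : E3 => ((y m : ℝ) : ℂ))
        (Complex.ofRealCLM.comp (EuclideanSpace.proj m : E3 →L[ℝ] ℝ)) x :=
      (Complex.ofRealCLM.comp (EuclideanSpace.proj m : E3 →L[ℝ] ℝ)).hasFDerivAt
    have hrad := pd_radial hx (hasDerivAt_qq ξ hr)
    have hF := hcoord.mul hrad
    rw [pd, hev.fderiv_eq, HasFDerivAt.fderiv (f := fun y : E3 => ((y m : ℝ) : ℂ) * qq ξ ‖y‖) hF]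
    simp only [ContinuousLinearMap.add_apply, ContinuousLinearMap.smul_apply,
      ContinuousLinearMap.comp_apply, ContinuousLinearMap.smulRight_apply,
      ContinuousLinearMap.one_apply, innerSL_apply_apply, smul_eq_mul,
      Complex.ofRealCLM_apply, PiLp.proj_apply]
    rw [real_inner_comm, EuclideanSpace.inner_single_left]
    simp [EuclideanSpace.single_apply]
    field_simp [hrc]
    ring
  simp only [key]
  have hsumsq : (∑ j : Fin 3, ((x j : ℝ) : ℂ) ^ 2) = ((‖x‖ : ℝ) : ℂ) ^ 2 := by
    have h1 : (∑ j : Fin 3, (x j : ℝ) ^ 2) = ‖x‖ ^ 2 := by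
      rw [EuclideanSpace.norm_eq, Real.sq_sqrt (by positivity)]
      simp [_root_.sq_abs]
    exact_mod_cast h1
  rw [Finset.sum_add_distrib, Finset.sum_const, ← Finset.sum_mul, hsumsq]
  have hPhi : Phi ξ x = g1 ξ ‖x‖ := rfl
  rw [hPhi]
  have := final_identity ξ hr
  simp only [Finset.card_univ, Fintype.card_fin, nsmul_eq_mul, Nat.cast_ofNat]
  calc (3 : ℂ) * qq ξ ‖x‖ + ((‖x‖ : ℝ) : ℂ) ^ 2 * (qq' ξ ‖x‖ / ((‖x‖ : ℝ) : ℂ)) + ξ ^ 2 * g1 ξ ‖x‖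
      = 3 * qq ξ ‖x‖ + (‖x‖ : ℂ) * qq' ξ ‖x‖ + ξ ^ 2 * g1 ξ ‖x‖ := by
        field_simp [hrc]
    _ = 0 := this
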